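/- Every face of a matroid polytope is itself a matroid polytope, i.e., for any face F of Q(M) there is a matroid M' on [n] with Q(M') = F. -/

import Mathlib

open Finset
open scoped Pointwise

/-- The indicator vector `e_B ∈ ℝⁿ` of a subset `B ⊆ [n]`. -/
def indVec (n : ℕ) (B : Finset (Fin n)) : Fin n → ℝ := fun i => if i ∈ B then 1 else 0

/-- A collection of subsets of `[n]` is the collection of bases of a matroid
(possibly the empty matroid) iff it satisfies the basis exchange axiom. -/
def IsBases {n : ℕ} (𝓑 : Finset (Finset (Fin n))) : Prop :=
  ∀ B₁ ∈ 𝓑, ∀ B₂ ∈ 𝓑, ∀ b₁ ∈ B₁ \ B₂, ∃ b₂ ∈ B₂ \ B₁, insert b₂ (B₁.erase b₁) ∈ 𝓑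

/-- The matroid (basis) polytope: convex hull of indicator vectors of the bases. -/
def polytope {n : ℕ} (𝓑 : Finset (Finset (Fin n))) : Set (Fin n → ℝ) :=
  convexHull ℝ (indVec n '' ↑𝓑)

section Aux

open Set in
/-- Symmetric basis exchange for matroids on a finite type. -/
lemma symm_exchange {α : Type*} [Finite α] (M : Matroid α) {B₁ B₂ : Set α} (hB₁ : M.IsBase B₁)
    (hB₂ : M.IsBase B₂) {e : α} (he : e ∈ B₁ \ B₂) :
    ∃ f ∈ B₂ \ B₁, M.IsBase (insert f (B₁ \ {e})) ∧ M.IsBase (insert e (B₂ \ {f})) := by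
  have heE : e ∈ M.E := hB₁.subset_ground he.1
  have hecl : e ∉ M.closure (B₁ \ {e}) := hB₁.indep.notMem_closure_sdiff_of_mem he.1
  -- a minimal subset C of B₂ whose closure contains e
  have hwf := Finite.to_wellFoundedLT (α := Set α)
  obtain ⟨C, ⟨hCB₂, heC⟩, hmin⟩ := hwf.wf.has_min {C | C ⊆ B₂ ∧ e ∈ M.closure C}
    ⟨B₂, Subset.rfl, by rw [hB₂.closure_eq]; exact heE⟩
  -- every f ∈ C can be exchanged for e in B₂
  have hC1 : ∀ f ∈ C, e ∉ M.closure (B₂ \ {f}) := by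
    intro f hfC hecl2
    have hCf : C \ {f} < C := by
      rw [Set.lt_iff_ssubset]
      exact Set.sdiff_singleton_ssubset.2 hfC
    have h1 : e ∉ M.closure (C \ {f}) := fun h =>
      hmin (C \ {f}) ⟨diff_subset.trans hCB₂, h⟩ hCf
    have h2 : e ∈ M.closure (insert f (C \ {f})) := by
      rwa [Set.insert_diff_singleton, Set.insert_eq_of_mem hfC]
    have h3 : f ∈ M.closure (insert e (C \ {f})) := Matroid.mem_closure_insert h1 h2
    have h4 : insert e (C \ {f}) ⊆ M.closure (B₂ \ {f}) := by
      refine Set.insert_subset hecl2 ?_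
      exact (Set.diff_subset_diff_left hCB₂).trans
        (M.subset_closure (B₂ \ {f}) (diff_subset.trans hB₂.subset_ground))
    have h5 : f ∈ M.closure (B₂ \ {f}) :=
      (M.closure_subset_closure_of_subset_closure h4) h3
    exact hB₂.indep.notMem_closure_sdiff_of_mem (hCB₂ hfC) h5
  -- some f ∈ C is not spanned by B₁ \ {e}
  have hC2 : ∃ f ∈ C, f ∉ M.closure (B₁ \ {e}) := by
    by_contra h
    push_neg at h
    exact hecl (M.closure_subset_closure_of_subset_closure h heC)
  obtain ⟨f, hfC, hfcl⟩ := hC2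
  have hfB₂ : f ∈ B₂ := hCB₂ hfC
  have hfB₁ : f ∉ B₁ := by
    intro hfB₁
    have hf' : f ∈ B₁ \ {e} := ⟨hfB₁, by rintro rfl; exact he.2 hfB₂⟩
    exact hfcl (M.subset_closure _ (diff_subset.trans hB₁.subset_ground) hf')
  have hfE : f ∈ M.E := hB₂.subset_ground hfB₂
  have hind1 : M.Indep (insert f (B₁ \ {e})) := by
    rw [(hB₁.indep.subset diff_subset).insert_indep_iff_of_notMem (fun h => hfB₁ h.1)]
    exact ⟨hfE, hfcl⟩
  have hind2 : M.Indep (insert e (B₂ \ {f})) := by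
    rw [(hB₂.indep.subset diff_subset).insert_indep_iff_of_notMem (fun h => he.2 h.1)]
    exact ⟨heE, hC1 f hfC⟩
  exact ⟨f, ⟨hfB₂, hfB₁⟩, hB₁.exchange_isBase_of_indep hfB₁ hind1,
    hB₂.exchange_isBase_of_indep he.2 hind2⟩

noncomputable def maxBases {n : ℕ} (w : Fin n → ℝ) (𝓑 : Finset (Finset (Fin n))) :
    Finset (Finset (Fin n)) :=
  𝓑.filter (fun B => ∀ B' ∈ 𝓑, ∑ i ∈ B', w i ≤ ∑ i ∈ B, w i)

lemma mem_maxBases {n : ℕ} {w : Fin n → ℝ} {𝓑 : Finset (Finset (Fin n))} {B : Finset (Fin n)} :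
    B ∈ maxBases w 𝓑 ↔ B ∈ 𝓑 ∧ ∀ B' ∈ 𝓑, ∑ i ∈ B', w i ≤ ∑ i ∈ B, w i :=
  Finset.mem_filter

lemma isBases_maxBases {n : ℕ} {𝓑 : Finset (Finset (Fin n))} (hM : IsBases 𝓑) (w : Fin n → ℝ) :
    IsBases (maxBases w 𝓑) := by
  intro B₁ hB₁ B₂ hB₂ b₁ hb₁
  rw [mem_maxBases] at hB₁ hB₂
  -- build the matroid on `Fin n` with bases `𝓑`
  set Base : Set (Fin n) → Prop := fun S => ∃ B ∈ 𝓑, ↑B = S with hBase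
  have hex : ∃ S, Base S := ⟨↑B₁, B₁, hB₁.1, rfl⟩
  have hexch : Matroid.ExchangeProperty Base := by
    rintro X Y ⟨BX, hBX, rfl⟩ ⟨BY, hBY, rfl⟩ a ha
    have ha' : a ∈ BX \ BY := by
      rw [Finset.mem_sdiff]; exact ⟨by exact_mod_cast ha.1, by exact_mod_cast ha.2⟩
    obtain ⟨b, hb, hbase⟩ := hM BX hBX BY hBY a ha'
    rw [Finset.mem_sdiff] at hb
    refine ⟨b, ⟨by exact_mod_cast hb.1, by exact_mod_cast hb.2⟩, _, hbase, ?_⟩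
    push_cast
    simp [Finset.coe_erase]
  set M : Matroid (Fin n) := Matroid.ofIsBaseOfFinite Set.finite_univ Base hex hexch
    (fun B _ => Set.subset_univ _) with hmodule
  have hMB : ∀ S, M.IsBase S ↔ Base S := by
    intro S; rw [hmodule, Matroid.ofIsBaseOfFinite_isBase]
  have hmb₁ : M.IsBase ↑B₁ := (hMB _).2 ⟨B₁, hB₁.1, rfl⟩
  have hmb₂ : M.IsBase ↑B₂ := (hMB _).2 ⟨B₂, hB₂.1, rfl⟩
  rw [Finset.mem_sdiff] at hb₁
  obtain ⟨f, hf, hbase1, hbase2⟩ := symm_exchange M hmb₁ hmb₂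
    (e := b₁) ⟨by exact_mod_cast hb₁.1, by exact_mod_cast hb₁.2⟩
  have hfB₂ : f ∈ B₂ := by exact_mod_cast hf.1
  have hfB₁ : f ∉ B₁ := by exact_mod_cast hf.2
  -- identify the two exchanged bases as members of 𝓑
  have hco1 : (↑(insert f (B₁.erase b₁)) : Set (Fin n)) = insert f (↑B₁ \ {b₁}) := by
    push_cast; simp [Finset.coe_erase]
  have hco2 : (↑(insert b₁ (B₂.erase f)) : Set (Fin n)) = insert b₁ (↑B₂ \ {f}) := by
    push_cast; simp [Finset.coe_erase]
  obtain ⟨B₃, hB₃, hB₃e⟩ := (hMB _).1 hbase1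
  obtain ⟨B₄, hB₄, hB₄e⟩ := (hMB _).1 hbase2
  have hB₃eq : B₃ = insert f (B₁.erase b₁) :=
    Finset.coe_injective (by rw [hB₃e, hco1])
  have hB₄eq : B₄ = insert b₁ (B₂.erase f) :=
    Finset.coe_injective (by rw [hB₄e, hco2])
  subst hB₃eq hB₄eq
  -- weight computations
  have hsum3 : ∑ i ∈ insert f (B₁.erase b₁), w i = ∑ i ∈ B₁, w i - w b₁ + w f := by
    rw [Finset.sum_insert (fun h => hfB₁ (Finset.mem_of_mem_erase h)),
      Finset.sum_erase_eq_sub hb₁.1]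
    ring
  have hsum4 : ∑ i ∈ insert b₁ (B₂.erase f), w i = ∑ i ∈ B₂, w i - w f + w b₁ := by
    rw [Finset.sum_insert (fun h => hb₁.2 (Finset.mem_of_mem_erase h)),
      Finset.sum_erase_eq_sub hfB₂]
    ring
  have h1 : w f ≤ w b₁ := by
    have := hB₁.2 _ hB₃
    rw [hsum3] at this; linarith
  have h2 : w b₁ ≤ w f := by
    have := hB₂.2 _ hB₄
    rw [hsum4] at this; linarith
  have hwfb : w f = w b₁ := le_antisymm h1 h2
  refine ⟨f, Finset.mem_sdiff.2 ⟨hfB₂, hfB₁⟩, mem_maxBases.2 ⟨hB₃, ?_⟩⟩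
  intro B' hB'
  rw [hsum3, hwfb]
  have := hB₁.2 B' hB'
  linarith

end Aux

/-- Every face of a matroid polytope is itself a matroid polytope. -/
theorem statement_4 (n : ℕ) (𝓑 : Finset (Finset (Fin n))) (hM : IsBases 𝓑)
    (F : Set (Fin n → ℝ)) (hF : IsExposed ℝ (polytope 𝓑) F) :
    ∃ 𝓑' : Finset (Finset (Fin n)), IsBases 𝓑' ∧ polytope 𝓑' = F := by
  classical
  by_cases hne : F.Nonempty
  · obtain ⟨l, hFeq⟩ := hF hne
    set w : Fin n → ℝ := fun i => l (Pi.single i 1) with hw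
    have hlind : ∀ B : Finset (Fin n), l (indVec n B) = ∑ i ∈ B, w i := by
      intro B
      have h1 : indVec n B = ∑ i ∈ B, Pi.single i (1 : ℝ) := by
        funext j
        simp [indVec, Pi.single_apply, Finset.sum_ite_eq, eq_comm]
      rw [h1, map_sum]
    have h𝓑 : 𝓑.Nonempty := by
      rw [Finset.nonempty_iff_ne_empty]
      rintro rfl
      obtain ⟨x, hx⟩ := hne
      rw [hFeq] at hx
      simpa [polytope] using hx.1
    obtain ⟨B₀, hB₀, hB₀max⟩ := Finset.exists_max_image 𝓑 (fun B => ∑ i ∈ B, w i) h𝓑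
    set c : ℝ := ∑ i ∈ B₀, w i with hc
    set s : Finset (Fin n → ℝ) := 𝓑.image (indVec n) with hs
    have hQs : polytope 𝓑 = convexHull ℝ ↑s := by rw [polytope, hs, Finset.coe_image]
    have hsle : ∀ y ∈ s, l y ≤ c := by
      intro y hy
      obtain ⟨B, hB, rfl⟩ := Finset.mem_image.1 hy
      rw [hlind]; exact hB₀max B hB
    -- every point of the polytope has l-value at most c
    have hQle : ∀ x ∈ polytope 𝓑, l x ≤ c := by
      intro x hx
      rw [hQs] at hx
      have : convexHull ℝ (↑s : Set (Fin n → ℝ)) ⊆ {x | l x ≤ c} :=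
        convexHull_min hsle (convex_halfSpace_le (LinearMap.isLinear _) c)
      exact this hx
    -- the vertex indVec B₀ is in the polytope with value c
    have hB₀mem : indVec n B₀ ∈ polytope 𝓑 :=
      subset_convexHull ℝ _ ⟨B₀, hB₀, rfl⟩
    have hF' : F = {x | x ∈ polytope 𝓑 ∧ l x = c} := by
      rw [hFeq]
      ext x
      constructor
      · rintro ⟨hxQ, hxmax⟩
        refine ⟨hxQ, le_antisymm (hQle x hxQ) ?_⟩
        calc c = l (indVec n B₀) := hc.trans (hlind B₀).symm
        _ ≤ l x := hxmax _ hB₀mem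
      · rintro ⟨hxQ, hxc⟩
        exact ⟨hxQ, fun y hy => by rw [hxc]; exact hQle y hy⟩
    refine ⟨maxBases w 𝓑, isBases_maxBases hM w, ?_⟩
    rw [hF']
    apply Set.Subset.antisymm
    · -- polytope 𝓑' ⊆ F
      apply convexHull_min
      rintro y ⟨B, hB, rfl⟩
      rw [Finset.mem_coe, mem_maxBases] at hB
      have hc' : l (indVec n B) = c := by
        rw [hlind]
        exact le_antisymm (hB₀max B hB.1) (hB.2 B₀ hB₀)
      exact ⟨subset_convexHull ℝ _ ⟨B, hB.1, rfl⟩, hc'⟩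
      · have hQconv : Convex ℝ (polytope 𝓑) := by
          rw [polytope]; exact convex_convexHull ℝ _
        exact hQconv.inter (convex_hyperplane (LinearMap.isLinear _) c)
    · -- F ⊆ polytope 𝓑'
      rintro x ⟨hxQ, hxc⟩
      rw [hQs, Finset.convexHull_eq] at hxQ
      obtain ⟨a, ha0, ha1, hax⟩ := hxQ
      rw [Finset.centerMass_eq_of_sum_1 _ _ ha1] at hax
      have hlx : ∑ y ∈ s, a y * l y = c := by
        rw [← hxc, ← hax, map_sum]
        simp [smul_eq_mul]
      have hzero : ∀ y ∈ s, a y * (c - l y) = 0 := by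
        have hsumz : ∑ y ∈ s, a y * (c - l y) = 0 := by
          have : ∑ y ∈ s, a y * (c - l y) = c * (∑ y ∈ s, a y) - ∑ y ∈ s, a y * l y := by
            rw [Finset.mul_sum, ← Finset.sum_sub_distrib]
            congr 1; ext y; ring
          rw [this, ha1, hlx]; ring
        intro y hy
        refine (Finset.sum_eq_zero_iff_of_nonneg ?_).1 hsumz y hy
        intro y hy
        exact mul_nonneg (ha0 y hy) (by linarith [hsle y hy])
      have hzero' : ∀ y ∈ s, l y ≠ c → a y = 0 := by
        intro y hy hyc
        rcases mul_eq_zero.1 (hzero y hy) with h | h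
        · exact h
        · exact absurd (by linarith : l y = c) hyc
      set s' : Finset (Fin n → ℝ) := s.filter (fun y => l y = c) with hs'
      have hsum1' : ∑ y ∈ s', a y = 1 := by
        rw [← ha1]
        apply Finset.sum_subset (Finset.filter_subset _ _)
        intro y hy hy'
        exact hzero' y hy (by simpa [hs', hy] using hy')
      have hax' : ∑ y ∈ s', a y • y = x := by
        rw [← hax]
        apply Finset.sum_subset (Finset.filter_subset _ _)
        intro y hy hy'
        rw [hzero' y hy (by simpa [hs', hy] using hy'), zero_smul]
      have hxs' : x ∈ convexHull ℝ (↑s' : Set (Fin n → ℝ)) := by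
        rw [Finset.convexHull_eq]
        exact ⟨a, fun y hy => ha0 y (Finset.filter_subset _ _ hy), hsum1',
          by rw [Finset.centerMass_eq_of_sum_1 _ _ hsum1']; exact hax'⟩
      refine convexHull_mono ?_ hxs'
      rintro y hy
      rw [Finset.mem_coe, hs', Finset.mem_filter, Finset.mem_image] at hy
      obtain ⟨⟨B, hB, rfl⟩, hyc⟩ := hy
      refine ⟨B, ?_, rfl⟩
      rw [Finset.mem_coe, mem_maxBases]
      refine ⟨hB, fun B' hB' => ?_⟩
      have hBc : (∑ i ∈ B, w i) = c := (hlind B).symm.trans hyc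
      rw [hBc]
      exact hB₀max B' hB'
  · rw [Set.not_nonempty_iff_eq_empty] at hne
    refine ⟨∅, ?_, ?_⟩
    · intro B hB; simp at hB
    · simp [polytope, hne]
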